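/- Let N ≥ 3, μ ∈ (0,1/4], let Ω ⊂ ℝ^N be a nonempty bounded open set with δ(x) the Euclidean distance from x to the complement of Ω, and let D ⊆ Ω be a nonempty open set. Let g : [0,∞) → ℝ be locally Lipschitz and satisfy g(εt) ≤ ε·g(t) for all t > 0 and all ε ∈ (0,1]. Let u₁, u₂ be twice continuously differentiable on D with u₁ ≥ 0 and u₂ > 0 on D, and suppose that Δu₁(x) + (μ/δ(x)²)·u₁(x) ≥ g(‖∇u₁(x)‖) for all x ∈ D (u₁ is a subsolution) and Δu₂(x) + (μ/δ(x)²)·u₂(x) ≤ g(‖∇u₂(x)‖) for all x ∈ D (u₂ is a supersolution). Assume further that there exist a compact set K ⊆ D and a constant c > 0 such that u₁(x) ≤ u₂(x) − c for all x ∈ D \ K. Then u₁(x) ≤ u₂(x) for all x ∈ D. -/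

import Mathlib

open MeasureTheory Metric Set

/-- The Laplacian of `u : ℝ^N → ℝ`, as the sum of the second partial derivatives
in the coordinate directions. -/
noncomputable def lap {N : ℕ} (u : EuclideanSpace ℝ (Fin N) → ℝ)
    (x : EuclideanSpace ℝ (Fin N)) : ℝ :=
  ∑ i : Fin N, fderiv ℝ (fun y => fderiv ℝ u y (EuclideanSpace.single i 1)) x
    (EuclideanSpace.single i 1)

section Auxiliary

open Filter Topology


/-- 1D second derivative test at a local max. -/
lemma sd_test {φ φ' : ℝ → ℝ} {m : ℝ}
    (hmax : IsLocalMax φ 0)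
    (hφ' : ∀ᶠ t in 𝓝 (0:ℝ), HasDerivAt φ (φ' t) t)
    (hm : HasDerivAt φ' m 0) : m ≤ 0 := by
  by_contra hpos
  push_neg at hpos
  have h0 : φ' 0 = 0 := hmax.hasDerivAt_eq_zero hφ'.self_of_nhds
  have hs : Tendsto (fun t => φ' t / t) (𝓝[≠] 0) (𝓝 m) := by
    have h := hasDerivAt_iff_tendsto_slope.1 hm
    refine h.congr (fun t => ?_)
    simp [slope_def_field, h0]
  have hev : ∀ᶠ t in 𝓝[>] (0:ℝ), 0 < φ' t := by
    have h1 : ∀ᶠ t in 𝓝[≠] (0:ℝ), 0 < φ' t / t := hs.eventually (eventually_gt_nhds hpos)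
    have h2 : 𝓝[>] (0:ℝ) ≤ 𝓝[≠] 0 := nhdsWithin_mono _ (fun x hx => ne_of_gt hx)
    filter_upwards [h1.filter_mono h2, self_mem_nhdsWithin] with t h ht
    have := mul_pos h (show (0:ℝ) < t from ht)
    rwa [div_mul_cancel₀ _ (ne_of_gt (show (0:ℝ) < t from ht))] at this
  have h3 : ∀ᶠ t in 𝓝[>] (0:ℝ), 0 < φ' t ∧ HasDerivAt φ (φ' t) t ∧ φ t ≤ φ 0 := by
    filter_upwards [hev, hφ'.filter_mono nhdsWithin_le_nhds,
      hmax.filter_mono nhdsWithin_le_nhds] with t a b c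
    exact ⟨a, b, c⟩
  obtain ⟨b, hb, hIoc⟩ := (mem_nhdsGT_iff_exists_Ioc_subset).1 h3
  have hbpos : 0 < b := hb
  have hmono : StrictMonoOn φ (Icc 0 b) := by
    refine strictMonoOn_of_deriv_pos (convex_Icc 0 b) ?_ ?_
    · intro t ht
      rcases eq_or_lt_of_le ht.1 with rfl | htpos
      · exact hφ'.self_of_nhds.continuousAt.continuousWithinAt
      · exact ((hIoc ⟨htpos, ht.2⟩).2.1).continuousAt.continuousWithinAt
    · intro t ht
      rw [interior_Icc] at ht
      have h := hIoc ⟨ht.1, le_of_lt ht.2⟩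
      rw [h.2.1.deriv]
      exact h.1
  have : φ 0 < φ b := hmono (left_mem_Icc.2 (le_of_lt hbpos)) (right_mem_Icc.2 (le_of_lt hbpos)) hbpos
  exact absurd (hIoc ⟨hbpos, le_refl b⟩).2.2 (not_le.2 this)

lemma dir_sd_nonpos {E : Type*} [NormedAddCommGroup E] [NormedSpace ℝ E] {F : E → ℝ} {D : Set E}
    (hDop : IsOpen D) {x : E} (hx : x ∈ D) (hF : ContDiffOn ℝ 2 F D)
    (hmax : IsLocalMax F x) (v : E) :
    fderiv ℝ (fun y => fderiv ℝ F y v) x v ≤ 0 := by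
  have h2 : (2 : WithTop ℕ∞) = 1 + 1 := by norm_num
  have hF1 : ContDiffOn ℝ 1 (fderiv ℝ F) D :=
    ((contDiffOn_succ_iff_fderiv_of_isOpen hDop).1 (h2 ▸ hF)).2.2
  have hFd : ∀ y ∈ D, DifferentiableAt ℝ F y := fun y hy =>
    ((hF.differentiableOn (by norm_num)) y hy).differentiableAt (hDop.mem_nhds hy)
  have hdF : DifferentiableAt ℝ (fderiv ℝ F) x :=
    ((hF1.differentiableOn one_ne_zero) x hx).differentiableAt (hDop.mem_nhds hx)
  set G : E → ℝ := fun y => fderiv ℝ F y v with hG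
  have hGd : DifferentiableAt ℝ G x := hdF.clm_apply (differentiableAt_const v)
  set ℓ : ℝ → E := fun t => x + t • v with hℓ
  have hℓd : ∀ t : ℝ, HasDerivAt ℓ v t := by
    intro t
    simpa [hℓ] using ((hasDerivAt_id t).smul_const v).const_add x
  have hℓ0 : ℓ 0 = x := by simp [hℓ]
  have hℓcont : Continuous ℓ := by fun_prop
  have hDt : ∀ᶠ t in 𝓝 (0:ℝ), ℓ t ∈ D := by
    have : Tendsto ℓ (𝓝 0) (𝓝 x) := by
      rw [← hℓ0]; exact hℓcont.tendsto 0
    exact this.eventually (hDop.mem_nhds hx)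
  have hφ' : ∀ᶠ t in 𝓝 (0:ℝ), HasDerivAt (F ∘ ℓ) (G (ℓ t)) t := by
    filter_upwards [hDt] with t ht
    exact (hFd (ℓ t) ht).hasFDerivAt.comp_hasDerivAt t (hℓd t)
  have hm : HasDerivAt (G ∘ ℓ) (fderiv ℝ G x v) 0 := by
    have hGd' : HasFDerivAt G (fderiv ℝ G x) (ℓ 0) := hℓ0 ▸ hGd.hasFDerivAt
    exact hGd'.comp_hasDerivAt 0 (hℓd 0)
  have hmaxφ : IsLocalMax (F ∘ ℓ) 0 := by
    have ht : Tendsto ℓ (𝓝 0) (𝓝 x) := by rw [← hℓ0]; exact hℓcont.tendsto 0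
    have := ht.eventually hmax
    simpa [IsLocalMax, IsMaxFilter, hℓ0] using this
  exact sd_test hmaxφ hφ' hm

variable {E : Type*} [NormedAddCommGroup E] [NormedSpace ℝ E]

lemma diffAt_of_contDiffOn {f : E → ℝ} {D : Set E} (hDop : IsOpen D) {x : E} (hx : x ∈ D)
    (hf : ContDiffOn ℝ 2 f D) : DifferentiableAt ℝ f x :=
  ((hf.differentiableOn (by norm_num)) x hx).differentiableAt (hDop.mem_nhds hx)

lemma diffAt_fderiv {f : E → ℝ} {D : Set E} (hDop : IsOpen D) {x : E} (hx : x ∈ D)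
    (hf : ContDiffOn ℝ 2 f D) : DifferentiableAt ℝ (fderiv ℝ f) x := by
  have h2 : (2 : WithTop ℕ∞) = 1 + 1 := by norm_num
  have hF1 : ContDiffOn ℝ 1 (fderiv ℝ f) D :=
    ((contDiffOn_succ_iff_fderiv_of_isOpen hDop).1 (h2 ▸ hf)).2.2
  exact ((hF1.differentiableOn one_ne_zero) x hx).differentiableAt (hDop.mem_nhds hx)

lemma diffAt_fderiv_apply {f : E → ℝ} {D : Set E} (hDop : IsOpen D) {x : E} (hx : x ∈ D)
    (hf : ContDiffOn ℝ 2 f D) (v : E) :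
    DifferentiableAt ℝ (fun y => fderiv ℝ f y v) x :=
  (diffAt_fderiv hDop hx hf).clm_apply (differentiableAt_const v)

lemma combo_fderiv {f₁ f₂ ψ : E → ℝ} {D : Set E} (hDop : IsOpen D)
    (hf₁ : ContDiffOn ℝ 2 f₁ D) (hf₂ : ContDiffOn ℝ 2 f₂ D) (hψ : ContDiff ℝ 2 ψ)
    (a b : ℝ) {x : E} (hx : x ∈ D) :
    fderiv ℝ (fun z => f₁ z - a * f₂ z + b * ψ z) x
      = fderiv ℝ f₁ x - a • fderiv ℝ f₂ x + b • fderiv ℝ ψ x := by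
  have d₁ := diffAt_of_contDiffOn hDop hx hf₁
  have d₂ := diffAt_of_contDiffOn hDop hx hf₂
  have dψ : DifferentiableAt ℝ ψ x := hψ.differentiable (by norm_num) |>.differentiableAt
  rw [fderiv_fun_add (f := fun y => f₁ y - a * f₂ y) ((d₁.sub (d₂.const_mul a))) (dψ.const_mul b),
    fderiv_fun_sub d₁ (d₂.const_mul a), fderiv_const_mul d₂ a, fderiv_const_mul dψ b]

lemma combo_sd {f₁ f₂ ψ : E → ℝ} {D : Set E} (hDop : IsOpen D)
    (hf₁ : ContDiffOn ℝ 2 f₁ D) (hf₂ : ContDiffOn ℝ 2 f₂ D) (hψ : ContDiff ℝ 2 ψ)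
    (a b : ℝ) {x : E} (hx : x ∈ D) (v : E) :
    fderiv ℝ (fun y => fderiv ℝ (fun z => f₁ z - a * f₂ z + b * ψ z) y v) x v
      = fderiv ℝ (fun y => fderiv ℝ f₁ y v) x v - a * fderiv ℝ (fun y => fderiv ℝ f₂ y v) x v
        + b * fderiv ℝ (fun y => fderiv ℝ ψ y v) x v := by
  have hψ' : ContDiffOn ℝ 2 ψ D := hψ.contDiffOn
  have heq : (fun y => fderiv ℝ (fun z => f₁ z - a * f₂ z + b * ψ z) y v)
      =ᶠ[𝓝 x] (fun y => fderiv ℝ f₁ y v - a * fderiv ℝ f₂ y v + b * fderiv ℝ ψ y v) := by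
    filter_upwards [hDop.mem_nhds hx] with y hy
    rw [combo_fderiv hDop hf₁ hf₂ hψ a b hy]
    simp
  rw [heq.fderiv_eq]
  have dA := diffAt_fderiv_apply hDop hx hf₁ v
  have dB := diffAt_fderiv_apply hDop hx hf₂ v
  have dC := diffAt_fderiv_apply hDop hx hψ' v
  rw [fderiv_fun_add (f := fun y => fderiv ℝ f₁ y v - a * fderiv ℝ f₂ y v) (dA.sub (dB.const_mul a)) (dC.const_mul b),
    fderiv_fun_sub dA (dB.const_mul a), fderiv_const_mul dB a, fderiv_const_mul dC b]
  simp

lemma combo_lap {N : ℕ} {f₁ f₂ ψ : EuclideanSpace ℝ (Fin N) → ℝ}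
    {D : Set (EuclideanSpace ℝ (Fin N))} (hDop : IsOpen D)
    (hf₁ : ContDiffOn ℝ 2 f₁ D) (hf₂ : ContDiffOn ℝ 2 f₂ D) (hψ : ContDiff ℝ 2 ψ)
    (a b : ℝ) {x : EuclideanSpace ℝ (Fin N)} (hx : x ∈ D) :
    lap (fun z => f₁ z - a * f₂ z + b * ψ z) x = lap f₁ x - a * lap f₂ x + b * lap ψ x := by
  unfold lap
  rw [Finset.mul_sum, Finset.mul_sum, ← Finset.sum_sub_distrib, ← Finset.sum_add_distrib]
  exact Finset.sum_congr rfl fun i _ => combo_sd hDop hf₁ hf₂ hψ a b hx _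

section Psi
variable {N : ℕ} (α : ℝ) (i₀ : Fin N)

noncomputable def psi (x : EuclideanSpace ℝ (Fin N)) : ℝ := Real.exp (α * x i₀)

lemma psi_pos (x : EuclideanSpace ℝ (Fin N)) : 0 < psi α i₀ x := Real.exp_pos _

lemma psi_eq_proj (x : EuclideanSpace ℝ (Fin N)) :
    psi α i₀ x = Real.exp (α * (EuclideanSpace.proj (𝕜 := ℝ) i₀) x) := rfl

lemma contDiff_psi : ContDiff ℝ 2 (psi α i₀ : EuclideanSpace ℝ (Fin N) → ℝ) := by
  exact Real.contDiff_exp.comp (contDiff_const.mul (EuclideanSpace.proj (𝕜 := ℝ) i₀).contDiff)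

lemma hasFDerivAt_psi (x : EuclideanSpace ℝ (Fin N)) :
    HasFDerivAt (psi α i₀)
      ((α * psi α i₀ x) • (EuclideanSpace.proj (𝕜 := ℝ) i₀ :
        EuclideanSpace ℝ (Fin N) →L[ℝ] ℝ)) x := by
  have h1 : HasFDerivAt (fun y : EuclideanSpace ℝ (Fin N) =>
      α * (EuclideanSpace.proj (𝕜 := ℝ) i₀) y)
      (α • (EuclideanSpace.proj (𝕜 := ℝ) i₀)) x :=
    ((EuclideanSpace.proj (𝕜 := ℝ) i₀).hasFDerivAt).const_mul α
  have h2 := (Real.hasDerivAt_exp (α * (EuclideanSpace.proj (𝕜 := ℝ) i₀) x)).comp_hasFDerivAt x h1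
  unfold psi
  simpa [smul_smul, mul_comm, Function.comp_def] using h2

lemma fderiv_psi (x : EuclideanSpace ℝ (Fin N)) :
    fderiv ℝ (psi α i₀) x = (α * psi α i₀ x) • (EuclideanSpace.proj (𝕜 := ℝ) i₀ :
      EuclideanSpace ℝ (Fin N) →L[ℝ] ℝ) :=
  (hasFDerivAt_psi α i₀ x).fderiv

lemma norm_proj_le : ‖(EuclideanSpace.proj (𝕜 := ℝ) i₀ : EuclideanSpace ℝ (Fin N) →L[ℝ] ℝ)‖ ≤ 1 := by
  refine ContinuousLinearMap.opNorm_le_bound _ zero_le_one (fun x => ?_)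
  rw [one_mul]
  have : |x i₀| ≤ ‖x‖ := by
    rw [EuclideanSpace.norm_eq]
    calc |x i₀| = Real.sqrt ((x i₀) ^ 2) := (Real.sqrt_sq_eq_abs _).symm
      _ ≤ Real.sqrt (∑ i, ‖x i‖ ^ 2) := by
          apply Real.sqrt_le_sqrt
          have := Finset.single_le_sum (f := fun i => ‖x i‖ ^ 2)
            (fun i _ => sq_nonneg _) (Finset.mem_univ i₀)
          simpa [Real.norm_eq_abs, sq_abs] using this
  simpa using this

lemma lap_psi (x : EuclideanSpace ℝ (Fin N)) :
    lap (psi α i₀) x = α ^ 2 * psi α i₀ x := by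
  unfold lap
  have key : ∀ i : Fin N,
      fderiv ℝ (fun y => fderiv ℝ (psi α i₀) y (EuclideanSpace.single i 1)) x
        (EuclideanSpace.single i 1)
      = α ^ 2 * psi α i₀ x * ((EuclideanSpace.single i (1:ℝ)) i₀) ^ 2 := by
    intro i
    have hval : ∀ y, fderiv ℝ (psi α i₀) y (EuclideanSpace.single i 1)
        = (α * (EuclideanSpace.single i (1:ℝ)) i₀) * psi α i₀ y := by
      intro y
      rw [fderiv_psi]
      simp
      try ring
    have heq : (fun y => fderiv ℝ (psi α i₀) y (EuclideanSpace.single i 1))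
        = fun y => (α * (EuclideanSpace.single i (1:ℝ)) i₀) * psi α i₀ y := funext hval
    rw [heq, fderiv_const_mul ((hasFDerivAt_psi α i₀ x).differentiableAt)]
    rw [ContinuousLinearMap.smul_apply, fderiv_psi]
    simp
    by_cases h : i₀ = i <;> simp [h] <;> try ring
  rw [Finset.sum_congr rfl (fun i _ => key i)]
  rw [← Finset.mul_sum]
  have : ∑ i : Fin N, ((EuclideanSpace.single i (1:ℝ)) i₀) ^ 2 = 1 := by
    rw [Finset.sum_eq_single i₀]
    · simp [EuclideanSpace.single_apply]
    · intro b _ hb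
      simp [EuclideanSpace.single_apply, Ne.symm hb]
    · intro h
      exact absurd (Finset.mem_univ i₀) h
  rw [this, mul_one]

end Psi


lemma abs_coord_le_norm {N : ℕ} (i₀ : Fin N) (x : EuclideanSpace ℝ (Fin N)) : |x i₀| ≤ ‖x‖ := by
  rw [EuclideanSpace.norm_eq]
  calc |x i₀| = Real.sqrt ((x i₀) ^ 2) := (Real.sqrt_sq_eq_abs _).symm
    _ ≤ Real.sqrt (∑ i, ‖x i‖ ^ 2) := by
        apply Real.sqrt_le_sqrt
        have := Finset.single_le_sum (f := fun i => ‖x i‖ ^ 2)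
          (fun i _ => sq_nonneg _) (Finset.mem_univ i₀)
        simpa [Real.norm_eq_abs, sq_abs] using this

lemma lipschitz_of_locally {g : ℝ → ℝ}
    (hglip : ∀ t ∈ Set.Ici (0:ℝ), ∃ K : NNReal, ∃ s ∈ nhdsWithin t (Set.Ici (0:ℝ)),
      LipschitzOnWith K g s)
    (R : ℝ) (hR : 0 ≤ R) :
    ∃ L : ℝ, 0 ≤ L ∧ ∀ a ∈ Icc (0:ℝ) R, ∀ b ∈ Icc (0:ℝ) R, |g a - g b| ≤ L * |a - b| := by
  have H : ∀ t : ℝ, ∃ Kt δt : ℝ, 0 ≤ Kt ∧ 0 < δt ∧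
      (0 ≤ t → ∀ a ∈ ball t δt ∩ Ici 0, ∀ b ∈ ball t δt ∩ Ici 0, |g a - g b| ≤ Kt * |a - b|) := by
    intro t
    by_cases ht : t ∈ Ici (0:ℝ)
    · obtain ⟨K, s, hs, hlip⟩ := hglip t ht
      obtain ⟨δ, hδ, hball⟩ := mem_nhdsWithin_iff.1 hs
      refine ⟨K, δ, K.coe_nonneg, hδ, fun _ a ha b hb => ?_⟩
      have := hlip.dist_le_mul a (hball ha) b (hball hb)
      simpa [Real.dist_eq] using this
    · exact ⟨0, 1, le_refl _, one_pos, fun h => absurd h ht⟩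
  choose Kf δf hK0 hδ0 hP using H
  -- finite subcover
  obtain ⟨T, hTsub, hTcov⟩ := isCompact_Icc.elim_nhds_subcover
    (fun t => ball t (δf t / 2)) (fun t _ => ball_mem_nhds t (half_pos (hδ0 t)))
  by_cases hTne : T.Nonempty
  case neg =>
    exfalso
    have := hTcov (left_mem_Icc.2 hR)
    simp [Finset.not_nonempty_iff_eq_empty.1 hTne] at this
  have hmem : ∀ a ∈ Icc (0:ℝ) R, ∃ t ∈ T, a ∈ ball t (δf t / 2) := by
    intro a ha
    have := hTcov ha
    simpa using this
  set δmin := T.inf' hTne (fun t => δf t / 2) with hδmin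
  have hδminpos : 0 < δmin := by
    rw [hδmin, Finset.lt_inf'_iff]
    exact fun t _ => half_pos (hδ0 t)
  set Lmax := T.sup' hTne Kf with hLmax
  have hLmax0 : 0 ≤ Lmax := le_trans (hK0 _) (Finset.le_sup' Kf hTne.choose_spec)
  have hLmaxle : ∀ t ∈ T, Kf t ≤ Lmax := fun t ht => Finset.le_sup' Kf ht
  set GT := T.sup' hTne (fun t => |g t|) with hGT
  -- bound on |g| over Icc
  have hbound : ∀ a ∈ Icc (0:ℝ) R, |g a| ≤ GT + Lmax * R := by
    intro a ha
    obtain ⟨t, htT, hat⟩ := hmem a ha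
    have htIcc : t ∈ Icc (0:ℝ) R := hTsub t htT
    have h1 : |g a - g t| ≤ Kf t * |a - t| := by
      refine hP t htIcc.1 a ⟨ball_subset_ball (by linarith [hδ0 t]) hat, ha.1⟩ t ⟨mem_ball_self (hδ0 t), htIcc.1⟩
    have h2 : |a - t| ≤ R := by
      rw [abs_sub_le_iff]
      constructor <;> linarith [ha.1, ha.2, htIcc.1, htIcc.2]
    calc |g a| ≤ |g t| + |g a - g t| := by
          have := abs_sub_abs_le_abs_sub (g a) (g t)
          linarith [abs_nonneg (g a - g t)]
      _ ≤ GT + Lmax * R := by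
          have h3 : |g t| ≤ GT := Finset.le_sup' (fun t => |g t|) htT
          have h4 : Kf t * |a - t| ≤ Lmax * R :=
            mul_le_mul (hLmaxle t htT) h2 (abs_nonneg _) hLmax0
          linarith
  set C := 2 * (GT + Lmax * R) with hC
  have hC0 : 0 ≤ C := by
    have := hbound 0 (left_mem_Icc.2 hR)
    have := abs_nonneg (g 0)
    rw [hC]; linarith
  refine ⟨max Lmax (C / δmin), le_trans hLmax0 (le_max_left _ _), fun a ha b hb => ?_⟩
  by_cases hab : |a - b| < δmin
  · obtain ⟨t, htT, hat⟩ := hmem a ha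
    have haball : a ∈ ball t (δf t) ∩ Ici 0 :=
      ⟨ball_subset_ball (by linarith [hδ0 t]) hat, ha.1⟩
    have hbball : b ∈ ball t (δf t) ∩ Ici 0 := by
      refine ⟨?_, hb.1⟩
      rw [mem_ball, Real.dist_eq]
      have h1 : |a - t| < δf t / 2 := by simpa [Real.dist_eq] using hat
      have h2 : δmin ≤ δf t / 2 := Finset.inf'_le _ htT
      calc |b - t| ≤ |b - a| + |a - t| := abs_sub_le b a t
        _ < δmin + δf t / 2 := by
            rw [abs_sub_comm b a]
            exact add_lt_add hab h1
        _ ≤ δf t := by linarith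
    calc |g a - g b| ≤ Kf t * |a - b| := hP t (hTsub t htT).1 a haball b hbball
      _ ≤ max Lmax (C / δmin) * |a - b| :=
        mul_le_mul_of_nonneg_right (le_trans (hLmaxle t htT) (le_max_left _ _)) (abs_nonneg _)
  · push_neg at hab
    have h1 : |g a - g b| ≤ C := by
      have ha' := hbound a ha
      have hb' := hbound b hb
      have htri : |g a - g b| ≤ |g a| + |g b| := by
        rw [sub_eq_add_neg]
        exact (abs_add_le _ _).trans_eq (by rw [abs_neg])
      rw [hC]
      linarith
    calc |g a - g b| ≤ C := h1
      _ = (C / δmin) * δmin := by field_simp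
      _ ≤ (C / δmin) * |a - b| := by
          apply mul_le_mul_of_nonneg_left hab (by positivity)
      _ ≤ max Lmax (C / δmin) * |a - b| :=
        mul_le_mul_of_nonneg_right (le_max_right _ _) (abs_nonneg _)

lemma g_zero_nonpos {g : ℝ → ℝ}
    (hglip : ∀ t ∈ Set.Ici (0:ℝ), ∃ K : NNReal, ∃ s ∈ nhdsWithin t (Set.Ici (0:ℝ)),
      LipschitzOnWith K g s)
    (hgh : ∀ t : ℝ, 0 < t → ∀ ε ∈ Set.Ioc (0:ℝ) 1, g (ε * t) ≤ ε * g t) :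
    g 0 ≤ 0 := by
  obtain ⟨K, s, hs, hlip⟩ := hglip 0 (mem_Ici.2 (le_refl 0))
  obtain ⟨δ, hδ, hball⟩ := mem_nhdsWithin_iff.1 hs
  have hev : ∀ᶠ ε in 𝓝[>] (0:ℝ), g 0 ≤ ε * (g 1 + K) := by
    filter_upwards [Ioo_mem_nhdsGT_of_mem (by constructor <;> simp [lt_min hδ one_pos] : (0:ℝ) ∈ Ico 0 (min δ 1))] with ε hε
    obtain ⟨hε0, hεδ⟩ := hε
    have hεδ' : ε < δ := lt_of_lt_of_le hεδ (min_le_left _ _)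
    have hε1 : ε ≤ 1 := le_of_lt (lt_of_lt_of_le hεδ (min_le_right _ _))
    have h1 : |g ε - g 0| ≤ K * ε := by
      have hmem : ε ∈ s := hball ⟨by simpa [Real.dist_eq, abs_of_pos hε0] using hεδ', le_of_lt hε0⟩
      have hmem0 : (0:ℝ) ∈ s := hball ⟨by simpa using hδ, mem_Ici.2 (le_refl 0)⟩
      have := hlip.dist_le_mul ε hmem 0 hmem0
      simpa [Real.dist_eq, abs_of_pos hε0] using this
    have h2 : g ε ≤ ε * g 1 := by
      have := hgh 1 one_pos ε ⟨hε0, hε1⟩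
      simpa using this
    have h3 : g 0 ≤ g ε + K * ε := by
      have := abs_sub_le_iff.1 h1
      linarith [this.2]
    calc g 0 ≤ g ε + K * ε := h3
      _ ≤ ε * g 1 + K * ε := by linarith
      _ = ε * (g 1 + K) := by ring
  have htend : Tendsto (fun ε : ℝ => ε * (g 1 + K)) (𝓝[>] 0) (𝓝 0) := by
    have : Tendsto (fun ε : ℝ => ε * (g 1 + K)) (𝓝 0) (𝓝 (0 * (g 1 + K))) :=
      (continuous_id.mul continuous_const).tendsto 0
    simpa using this.mono_left nhdsWithin_le_nhds
  exact ge_of_tendsto htend hev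

end Auxiliary

section Main

open Filter Topology

lemma norm_gradient_eq {N : ℕ} (f : EuclideanSpace ℝ (Fin N) → ℝ) (x : EuclideanSpace ℝ (Fin N)) :
    ‖gradient f x‖ = ‖fderiv ℝ f x‖ := by
  unfold gradient
  exact LinearIsometryEquiv.norm_map _ _

set_option maxHeartbeats 2000000 in
/-- Comparison principle (Lemma 4.6) for `-L_μ u + g(‖∇u‖) = 0`. -/
theorem stmt_3 (N : ℕ) (hN : 3 ≤ N) (μ : ℝ) (hμ : μ ∈ Set.Ioc (0:ℝ) (1/4))
    (Ω : Set (EuclideanSpace ℝ (Fin N))) (hne : Ω.Nonempty)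
    (hbdd : Bornology.IsBounded Ω) (hop : IsOpen Ω)
    (D : Set (EuclideanSpace ℝ (Fin N))) (hD : D ⊆ Ω) (hDne : D.Nonempty) (hDop : IsOpen D)
    (g : ℝ → ℝ)
    (hglip : ∀ t ∈ Set.Ici (0:ℝ), ∃ K : NNReal, ∃ s ∈ nhdsWithin t (Set.Ici (0:ℝ)),
      LipschitzOnWith K g s)
    (hgh : ∀ t : ℝ, 0 < t → ∀ ε ∈ Set.Ioc (0:ℝ) 1, g (ε * t) ≤ ε * g t)
    (u₁ u₂ : EuclideanSpace ℝ (Fin N) → ℝ)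
    (hu₁ : ContDiffOn ℝ 2 u₁ D) (hu₂ : ContDiffOn ℝ 2 u₂ D)
    (hu₁nn : ∀ x ∈ D, 0 ≤ u₁ x) (hu₂pos : ∀ x ∈ D, 0 < u₂ x)
    (hsub : ∀ x ∈ D, g ‖gradient u₁ x‖ ≤ lap u₁ x + (μ / (infDist x Ωᶜ) ^ 2) * u₁ x)
    (hsup : ∀ x ∈ D, lap u₂ x + (μ / (infDist x Ωᶜ) ^ 2) * u₂ x ≤ g ‖gradient u₂ x‖)
    (K : Set (EuclideanSpace ℝ (Fin N))) (hK : K ⊆ D) (hKc : IsCompact K)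
    (c : ℝ) (hc : 0 < c) (hbdry : ∀ x ∈ D \ K, u₁ x ≤ u₂ x - c) :
    ∀ x ∈ D, u₁ x ≤ u₂ x := by
  by_contra hcon
  push_neg at hcon
  obtain ⟨y₀, hy₀D, hy₀⟩ := hcon
  -- y₀ ∈ K
  have hy₀K : y₀ ∈ K := by
    by_contra h
    have := hbdry y₀ ⟨hy₀D, h⟩
    linarith
  -- continuity
  have hu₁c : ContinuousOn u₁ D := hu₁.continuousOn
  have hu₂c : ContinuousOn u₂ D := hu₂.continuousOn
  have hrcont : ContinuousOn (fun x => u₁ x / u₂ x) K :=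
    (hu₁c.mono hK).div (hu₂c.mono hK) (fun x hx => ne_of_gt (hu₂pos x (hK hx)))
  obtain ⟨y, hyK, hymax⟩ := hKc.exists_isMaxOn ⟨y₀, hy₀K⟩ hrcont
  obtain ⟨τ, hτdef⟩ : ∃ τ : ℝ, τ = u₁ y / u₂ y := ⟨_, rfl⟩
  have hu₂y : 0 < u₂ y := hu₂pos y (hK hyK)
  have hτ1 : 1 < τ := by
    have h1 : u₁ y₀ / u₂ y₀ ≤ τ := hτdef ▸ hymax hy₀K
    have h2 : 1 < u₁ y₀ / u₂ y₀ := (one_lt_div (hu₂pos y₀ hy₀D)).2 hy₀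
    linarith
  have hτpos : 0 < τ := by linarith
  have hτu : τ * u₂ y = u₁ y := by
    rw [hτdef, div_mul_cancel₀ _ (ne_of_gt hu₂y)]
  have hKle : ∀ x ∈ K, u₁ x ≤ τ * u₂ x := by
    intro x hx
    have h1 : u₁ x / u₂ x ≤ τ := hτdef ▸ hymax hx
    have h2 := hu₂pos x (hK hx)
    calc u₁ x = (u₁ x / u₂ x) * u₂ x := by field_simp
      _ ≤ τ * u₂ x := mul_le_mul_of_nonneg_right h1 (le_of_lt h2)
  have hDKle : ∀ x ∈ D \ K, u₁ x ≤ τ * u₂ x - c := by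
    intro x hx
    have h1 := hbdry x hx
    have h2 := hu₂pos x hx.1
    nlinarith
  -- coordinate
  have hN0 : 0 < N := by omega
  obtain ⟨i₀, hi₀⟩ : ∃ i₀ : Fin N, i₀ = ⟨0, hN0⟩ := ⟨_, rfl⟩
  -- bound on gradient of u₂ on K
  have h2' : (2 : WithTop ℕ∞) = 1 + 1 := by norm_num
  have hu₂f1 : ContDiffOn ℝ 1 (fderiv ℝ u₂) D :=
    ((contDiffOn_succ_iff_fderiv_of_isOpen hDop).1 (h2' ▸ hu₂)).2.2
  obtain ⟨C₂, hC₂⟩ := hKc.exists_bound_of_continuousOn ((hu₂f1.continuousOn).mono hK)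
  have hC₂0 : 0 ≤ C₂ := le_trans (norm_nonneg _) (hC₂ y hyK)
  obtain ⟨R, hRdef⟩ : ∃ R : ℝ, R = τ * C₂ + 1 := ⟨_, rfl⟩
  have hR0 : 0 ≤ R := by rw [hRdef]; positivity
  obtain ⟨L, hL0, hLip⟩ := lipschitz_of_locally hglip R hR0
  obtain ⟨α, hαdef⟩ : ∃ α : ℝ, α = L + 1 := ⟨_, rfl⟩
  have hα0 : 0 < α := by linarith
  -- bound on Ω
  obtain ⟨B, hB⟩ := hbdd.exists_norm_le
  have hB0 : 0 ≤ B := le_trans (norm_nonneg _) (hB _ hne.choose_spec)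
  obtain ⟨S, hSdef⟩ : ∃ S : ℝ, S = Real.exp (α * B) := ⟨_, rfl⟩
  have hS0 : 0 < S := hSdef ▸ Real.exp_pos _
  have hψle : ∀ x ∈ D, psi α i₀ x ≤ S := by
    intro x hx
    rw [hSdef]
    unfold psi
    apply Real.exp_le_exp.2
    have h1 : x i₀ ≤ |x i₀| := le_abs_self _
    have h2 : |x i₀| ≤ ‖x‖ := abs_coord_le_norm i₀ x
    have h3 : ‖x‖ ≤ B := hB x (hD hx)
    nlinarith
  obtain ⟨ε, hεdef⟩ : ∃ ε : ℝ, ε = min (c / (2 * S)) (1 / (α * S)) := ⟨_, rfl⟩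
  have hε0 : 0 < ε := by rw [hεdef]; exact lt_min (by positivity) (by positivity)
  have hεS : ε * S ≤ c / 2 := by
    have : ε ≤ c / (2 * S) := hεdef ▸ min_le_left _ _
    calc ε * S ≤ (c / (2 * S)) * S := mul_le_mul_of_nonneg_right this (le_of_lt hS0)
      _ = c / 2 := by field_simp
  have hεαS : ε * (α * S) ≤ 1 := by
    have h : ε ≤ 1 / (α * S) := hεdef ▸ min_le_right _ _
    calc ε * (α * S) ≤ (1 / (α * S)) * (α * S) :=
          mul_le_mul_of_nonneg_right h (by positivity)
      _ = 1 := by field_simp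
  -- the function Fc
  obtain ⟨Fc, hFcdef⟩ : ∃ Fc : EuclideanSpace ℝ (Fin N) → ℝ,
    Fc = fun z => u₁ z - τ * u₂ z + ε * psi α i₀ z := ⟨_, rfl⟩
  have hψcd : ContDiff ℝ 2 (psi α i₀ : EuclideanSpace ℝ (Fin N) → ℝ) := contDiff_psi α i₀
  have hFccd : ContDiffOn ℝ 2 Fc D := by
    rw [hFcdef]
    exact (hu₁.sub (contDiffOn_const.mul hu₂)).add (contDiffOn_const.mul hψcd.contDiffOn)
  have hFcc : ContinuousOn Fc D := hFccd.continuousOn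
  have hFcy : Fc y = ε * psi α i₀ y := by
    rw [hFcdef]; simp only; rw [hτu]; ring
  have hFcypos : 0 < Fc y := by
    rw [hFcy]; exact mul_pos hε0 (psi_pos α i₀ y)
  have hFDK : ∀ x ∈ D \ K, Fc x ≤ -c / 2 := by
    intro x hx
    have h1 := hDKle x hx
    have h2 : ε * psi α i₀ x ≤ c / 2 := by
      calc ε * psi α i₀ x ≤ ε * S := mul_le_mul_of_nonneg_left (hψle x hx.1) (le_of_lt hε0)
        _ ≤ c / 2 := hεS
    rw [hFcdef]; simp only; linarith
  obtain ⟨xs, hxsK, hxsmax⟩ := hKc.exists_isMaxOn ⟨y, hyK⟩ (hFcc.mono hK)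
  have hxsD : xs ∈ D := hK hxsK
  have hFcxs : 0 < Fc xs := lt_of_lt_of_le hFcypos (hxsmax hyK)
  have hglobal : ∀ x ∈ D, Fc x ≤ Fc xs := by
    intro x hx
    by_cases hxK : x ∈ K
    · exact hxsmax hxK
    · have h1 := hFDK x ⟨hx, hxK⟩
      have h2 : (-c/2 : ℝ) < Fc xs := by linarith
      linarith
  have hlocmax : IsLocalMax Fc xs :=
    Filter.eventually_of_mem (hDop.mem_nhds hxsD) hglobal
  -- first derivative relation
  have hfd0 : fderiv ℝ Fc xs = 0 := hlocmax.fderiv_eq_zero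
  have hfdcombo : fderiv ℝ Fc xs
      = fderiv ℝ u₁ xs - τ • fderiv ℝ u₂ xs + ε • fderiv ℝ (psi α i₀) xs := by
    rw [hFcdef]
    exact combo_fderiv hDop hu₁ hu₂ hψcd τ ε hxsD
  have hsub0 : fderiv ℝ u₁ xs - τ • fderiv ℝ u₂ xs = -(ε • fderiv ℝ (psi α i₀) xs) := by
    have h := hfdcombo.symm.trans hfd0
    rwa [add_eq_zero_iff_eq_neg] at h
  obtain ⟨a, hadef⟩ : ∃ a : ℝ, a = ‖fderiv ℝ u₁ xs‖ := ⟨_, rfl⟩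
  obtain ⟨b₂, hb₂def⟩ : ∃ b₂ : ℝ, b₂ = ‖fderiv ℝ u₂ xs‖ := ⟨_, rfl⟩
  have hψxs : 0 < psi α i₀ xs := psi_pos α i₀ xs
  have hfψ : ‖fderiv ℝ (psi α i₀) xs‖ ≤ α * psi α i₀ xs := by
    rw [fderiv_psi, norm_smul]
    calc ‖α * psi α i₀ xs‖ * ‖(EuclideanSpace.proj (𝕜 := ℝ) i₀ :
          EuclideanSpace ℝ (Fin N) →L[ℝ] ℝ)‖
        ≤ ‖α * psi α i₀ xs‖ * 1 :=
          mul_le_mul_of_nonneg_left (norm_proj_le i₀) (norm_nonneg _)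
      _ = α * psi α i₀ xs := by
          rw [mul_one, Real.norm_eq_abs, abs_of_pos (by positivity)]
  have hnormdiff : ‖fderiv ℝ u₁ xs - τ • fderiv ℝ u₂ xs‖ ≤ ε * (α * psi α i₀ xs) := by
    rw [hsub0, norm_neg, norm_smul, Real.norm_eq_abs, abs_of_pos hε0]
    exact mul_le_mul_of_nonneg_left hfψ (le_of_lt hε0)
  have hkey1 : |a - τ * b₂| ≤ ε * (α * psi α i₀ xs) := by
    have h1 : |‖fderiv ℝ u₁ xs‖ - ‖τ • fderiv ℝ u₂ xs‖|
        ≤ ‖fderiv ℝ u₁ xs - τ • fderiv ℝ u₂ xs‖ := abs_norm_sub_norm_le _ _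
    rw [norm_smul, Real.norm_eq_abs, abs_of_pos hτpos, ← hadef, ← hb₂def] at h1
    exact le_trans h1 hnormdiff
  have hεαψ1 : ε * (α * psi α i₀ xs) ≤ 1 := by
    have h1 := hψle xs hxsD
    calc ε * (α * psi α i₀ xs) = (ε * α) * psi α i₀ xs := by ring
      _ ≤ (ε * α) * S := mul_le_mul_of_nonneg_left h1 (by positivity)
      _ = ε * (α * S) := by ring
      _ ≤ 1 := hεαS
  have hb₂0 : 0 ≤ b₂ := hb₂def ▸ norm_nonneg _
  have hbR : τ * b₂ ≤ τ * C₂ :=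
    mul_le_mul_of_nonneg_left (hb₂def ▸ hC₂ xs hxsK) (le_of_lt hτpos)
  have haR : a ≤ R := by
    have h1 : a - τ * b₂ ≤ |a - τ * b₂| := le_abs_self _
    rw [hRdef]
    linarith [le_trans hkey1 hεαψ1]
  have haIcc : a ∈ Icc (0:ℝ) R := ⟨hadef ▸ norm_nonneg _, haR⟩
  have hbIcc : τ * b₂ ∈ Icc (0:ℝ) R := ⟨by positivity, by rw [hRdef]; linarith⟩
  -- g estimates
  have hga : g (τ * b₂) - L * (ε * (α * psi α i₀ xs)) ≤ g a := by
    have h := hLip a haIcc (τ * b₂) hbIcc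
    have h2 : L * |a - τ * b₂| ≤ L * (ε * (α * psi α i₀ xs)) :=
      mul_le_mul_of_nonneg_left hkey1 hL0
    have h3 := (abs_sub_le_iff.1 h).2
    linarith
  have hgτ : τ * g b₂ ≤ g (τ * b₂) := by
    rcases eq_or_lt_of_le hb₂0 with h0 | hpos
    · rw [← h0, mul_zero]
      have hg0 := g_zero_nonpos hglip hgh
      have h4 : 0 ≤ (τ - 1) * (-(g 0)) := mul_nonneg (by linarith) (by linarith)
      linarith [h4]
    · have h := hgh (τ * b₂) (by positivity) (1/τ)
        ⟨by positivity, by rw [div_le_one hτpos]; linarith⟩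
      rw [show (1/τ) * (τ * b₂) = b₂ by field_simp] at h
      have h2 := mul_le_mul_of_nonneg_left h (le_of_lt hτpos)
      rw [show τ * (1/τ * g (τ * b₂)) = g (τ * b₂) by field_simp] at h2
      exact h2
  -- gradient norms
  have hgrad1 : ‖gradient u₁ xs‖ = a := hadef ▸ norm_gradient_eq u₁ xs
  have hgrad2 : ‖gradient u₂ xs‖ = b₂ := hb₂def ▸ norm_gradient_eq u₂ xs
  -- laplacian comparison
  have hlapF : lap Fc xs ≤ 0 := by
    unfold lap
    exact Finset.sum_nonpos fun i _ => dir_sd_nonpos hDop hxsD hFccd hlocmax _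
  have hlapcombo : lap Fc xs = lap u₁ xs - τ * lap u₂ xs + ε * lap (psi α i₀) xs := by
    rw [hFcdef]
    exact combo_lap hDop hu₁ hu₂ hψcd τ ε hxsD
  have hlapψ : lap (psi α i₀) xs = α ^ 2 * psi α i₀ xs := lap_psi α i₀ xs
  have hq0 : 0 ≤ μ / (infDist xs Ωᶜ) ^ 2 := div_nonneg (le_of_lt hμ.1) (sq_nonneg _)
  have hs1 : g a ≤ lap u₁ xs + (μ / (infDist xs Ωᶜ) ^ 2) * u₁ xs := by
    have h := hsub xs hxsD
    rwa [hgrad1] at h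
  have hs2 : lap u₂ xs + (μ / (infDist xs Ωᶜ) ^ 2) * u₂ xs ≤ g b₂ := by
    have h := hsup xs hxsD
    rwa [hgrad2] at h
  have hqK : (μ / (infDist xs Ωᶜ) ^ 2) * u₁ xs ≤ (μ / (infDist xs Ωᶜ) ^ 2) * (τ * u₂ xs) :=
    mul_le_mul_of_nonneg_left (hKle xs hxsK) hq0
  have f2' := mul_le_mul_of_nonneg_left hs2 (le_of_lt hτpos)
  have hiden : ε * (α ^ 2 * psi α i₀ xs) - L * (ε * (α * psi α i₀ xs))
      = ε * (α * psi α i₀ xs) := by rw [hαdef]; ring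
  have hposfin : 0 < ε * (α * psi α i₀ xs) := by positivity
  rw [hlapcombo, hlapψ] at hlapF
  linarith only [hlapF, hga, hgτ, hs1, hqK, f2', hiden, hposfin]

end Main
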